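/- Let G and G' be finite simple graphs on n vertices whose A_α matrices have the same characteristic polynomial for some real α with 0 < α ≤ 1. Let d_1 ≥ d_2 ≥ ⋯ ≥ d_n and d'_1 ≥ d'_2 ≥ ⋯ ≥ d'_n be the degree sequences of G and G', respectively. Then ∑_{1≤i<j≤n} d_i d_j = ∑_{1≤i<j≤n} d'_i d'_j and ∑_{1≤i≤n} d_i² = ∑_{1≤i≤n} (d'_i)². -/

import Mathlib

open SimpleGraph Matrix Finset

attribute [local instance] Classical.propDecidable

/-- The matrix `A_α(G) = α·D(G) + (1-α)·A(G)` of a finite simple graph `G`,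
where `D(G)` is the diagonal matrix of vertex degrees and `A(G)` is the
adjacency matrix over `ℝ`. -/
noncomputable def Aalpha {V : Type} [Fintype V] (G : SimpleGraph V) (α : ℝ) :
    Matrix V V ℝ :=
  α • Matrix.diagonal (fun v => (G.degree v : ℝ)) + (1 - α) • G.adjMatrix ℝ

/-- `G` is determined by its `A_α`-spectrum: every finite simple graph whose
`A_α` matrix has the same characteristic polynomial as that of `G` is
isomorphic to `G`. -/
def IsDSAalpha {V : Type} [Fintype V] (G : SimpleGraph V) (α : ℝ) : Prop :=
  ∀ (W : Type) [Fintype W] (H : SimpleGraph W),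
    (Aalpha H α).charpoly = (Aalpha G α).charpoly → Nonempty (H ≃g G)

/-- The largest eigenvalue of a matrix: the supremum of the (real) roots of its
characteristic polynomial.  For a real symmetric matrix these roots are exactly
its eigenvalues. -/
noncomputable def lambda1 {V : Type} [Fintype V] (M : Matrix V V ℝ) : ℝ :=
  sSup {x : ℝ | M.charpoly.IsRoot x}

/-- The join `G ∨ H` of two graphs: their disjoint union together with all
edges joining a vertex of `G` to a vertex of `H`. -/
def joinG {V W : Type} (G : SimpleGraph V) (H : SimpleGraph W) :
    SimpleGraph (V ⊕ W) :=
  (G ⊕g H) ⊔ completeBipartiteGraph V W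

/-- The `M`-coronal `Γ_M(x) = 1ᵀ (xI − M)⁻¹ 1`: the sum of all entries of
`(xI − M)⁻¹`. -/
noncomputable def coronal {V : Type} [Fintype V] (M : Matrix V V ℝ) (x : ℝ) : ℝ :=
  ∑ i, ∑ j, (x • (1 : Matrix V V ℝ) - M)⁻¹ i j

/-- Disjoint union of a family of graphs: two vertices are adjacent iff they lie
in the same summand and are adjacent there. -/
def sigmaGraph {ι : Type} {F : ι → Type} (G : ∀ i, SimpleGraph (F i)) :
    SimpleGraph (Σ i, F i) :=
  SimpleGraph.fromRel (fun x y => ∃ h : x.1 = y.1, (G y.1).Adj (h ▸ x.2) y.2)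

open Polynomial
section Aux

variable {n : Type} [Fintype n] [DecidableEq n]

lemma charpoly_conj' (P : (Matrix n n ℝ)ˣ) (M : Matrix n n ℝ) :
    ((P : Matrix n n ℝ) * M * (↑P⁻¹ : Matrix n n ℝ)).charpoly = M.charpoly := by
  set Q : Matrix n n ℝ[X] := (P : Matrix n n ℝ).map (C : ℝ →+* ℝ[X]) with hQ
  set Q' : Matrix n n ℝ[X] := ((↑P⁻¹ : Matrix n n ℝ)).map (C : ℝ →+* ℝ[X]) with hQ'
  have hQQ' : Q * Q' = 1 := by rw [← Matrix.map_mul]; simp [Q, Q']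
  have hch : charmatrix ((P : Matrix n n ℝ) * M * (↑P⁻¹ : Matrix n n ℝ))
      = Q * charmatrix M * Q' := by
    rw [charmatrix, charmatrix, mul_sub, sub_mul]
    congr 1
    · rw [scalar_apply, ← Matrix.smul_one_eq_diagonal, mul_smul_comm, smul_mul_assoc,
        mul_one, hQQ']
    · simp only [RingHom.mapMatrix_apply]
      rw [Matrix.map_mul, Matrix.map_mul]
  have hdet : det Q * det Q' = 1 := by rw [← det_mul, hQQ', det_one]
  rw [Matrix.charpoly, Matrix.charpoly, hch, det_mul, det_mul, mul_comm (det Q),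
    mul_assoc, hdet, mul_one]

lemma charpoly_eq_prod_eigenvalues (M : Matrix n n ℝ) (hM : M.IsHermitian) :
    M.charpoly = ∏ i, (X - C (hM.eigenvalues i)) := by
  have hU := hM.spectral_theorem
  set U : Matrix n n ℝ := (hM.eigenvectorUnitary : Matrix n n ℝ) with hUdef
  have h1 : U * star U = 1 := (Matrix.mem_unitaryGroup_iff).mp hM.eigenvectorUnitary.2
  have h2 : star U * U = 1 := (Matrix.mem_unitaryGroup_iff').mp hM.eigenvectorUnitary.2
  let P : (Matrix n n ℝ)ˣ := ⟨U, star U, h1, h2⟩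
  have hPinv : (↑P⁻¹ : Matrix n n ℝ) = star U := rfl
  have key : M = (P : Matrix n n ℝ) * diagonal (RCLike.ofReal ∘ hM.eigenvalues)
      * (↑P⁻¹ : Matrix n n ℝ) := by
    rw [hPinv]; exact hU
  rw [congrArg Matrix.charpoly key, charpoly_conj']
  rw [Matrix.charpoly, charmatrix, scalar_apply, RingHom.mapMatrix_apply]
  rw [Matrix.diagonal_map (by simp), Matrix.diagonal_sub, det_diagonal]
  simp [RCLike.ofReal]

lemma charpoly_roots_eig (M : Matrix n n ℝ) (hM : M.IsHermitian) :
    M.charpoly.roots = Finset.univ.val.map hM.eigenvalues := by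
  rw [charpoly_eq_prod_eigenvalues M hM, Finset.prod_eq_multiset_prod,
    show (fun i => X - C (hM.eigenvalues i)) = (fun a => X - C a) ∘ hM.eigenvalues from rfl,
    ← Multiset.map_map, roots_multiset_prod_X_sub_C]

lemma trace_sq_eq (M : Matrix n n ℝ) (hM : M.IsHermitian) :
    (M * M).trace = ∑ i, hM.eigenvalues i ^ 2 ∧ M.trace = ∑ i, hM.eigenvalues i := by
  have hU := hM.spectral_theorem
  set U : Matrix n n ℝ := (hM.eigenvectorUnitary : Matrix n n ℝ) with hUdef
  have h2 : star U * U = 1 := (Matrix.mem_unitaryGroup_iff').mp hM.eigenvectorUnitary.2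
  set D : Matrix n n ℝ := diagonal (RCLike.ofReal ∘ hM.eigenvalues) with hD
  replace hU : M = U * D * star U := hU
  constructor
  · have key : M * M = U * (D * D) * star U := by
      rw [hU]
      have h3 : U * D * star U * (U * D * star U) = U * D * (star U * U * (D * star U)) := by
        simp only [mul_assoc]
      rw [h3, h2, Matrix.one_mul]
      simp only [mul_assoc]
    rw [key, Matrix.trace_mul_cycle, ← Matrix.mul_assoc, h2, Matrix.one_mul, hD,
      diagonal_mul_diagonal, trace_diagonal]
    simp [sq, RCLike.ofReal]
  · rw [congrArg Matrix.trace hU, Matrix.trace_mul_cycle, h2,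
      Matrix.one_mul, hD, trace_diagonal]
    simp [RCLike.ofReal]

end Aux

lemma traces_of_cospectral {V W : Type} [Fintype V] [Fintype W]
    (M : Matrix V V ℝ) (N : Matrix W W ℝ) (hM : M.IsHermitian) (hN : N.IsHermitian)
    (h : M.charpoly = N.charpoly) :
    M.trace = N.trace ∧ (M * M).trace = (N * N).trace := by
  classical
  have hroots : (Finset.univ.val.map hM.eigenvalues : Multiset ℝ)
      = Finset.univ.val.map hN.eigenvalues := by
    rw [← charpoly_roots_eig M hM, ← charpoly_roots_eig N hN, h]
  have hsum : ∑ i, hM.eigenvalues i = ∑ j, hN.eigenvalues j := by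
    rw [Finset.sum_eq_multiset_sum, Finset.sum_eq_multiset_sum, hroots]
  have hsq : ∑ i, hM.eigenvalues i ^ 2 = ∑ j, hN.eigenvalues j ^ 2 := by
    rw [Finset.sum_eq_multiset_sum, Finset.sum_eq_multiset_sum,
      show (Finset.univ.val.map fun i => hM.eigenvalues i ^ 2)
        = (Finset.univ.val.map hM.eigenvalues).map (fun x => x ^ 2) by
          rw [Multiset.map_map]; rfl,
      show (Finset.univ.val.map fun j => hN.eigenvalues j ^ 2)
        = (Finset.univ.val.map hN.eigenvalues).map (fun x => x ^ 2) by
          rw [Multiset.map_map]; rfl,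
      hroots]
  obtain ⟨hM2, hM1⟩ := trace_sq_eq M hM
  obtain ⟨hN2, hN1⟩ := trace_sq_eq N hN
  exact ⟨by rw [hM1, hN1, hsum], by rw [hM2, hN2, hsq]⟩

lemma aalpha_isHermitian {V : Type} [Fintype V] (G : SimpleGraph V) (α : ℝ) :
    (Aalpha G α).IsHermitian := by
  classical
  show (Aalpha G α)ᴴ = Aalpha G α
  ext i j
  by_cases hij : i = j
  · subst hij; simp [Aalpha]
  · simp [Aalpha, Matrix.conjTranspose_apply, Matrix.diagonal_apply_ne, hij, Ne.symm hij,
      G.adj_comm j i]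

lemma aalpha_trace {V : Type} [Fintype V] (G : SimpleGraph V) (α : ℝ) :
    (Aalpha G α).trace = α * ∑ v, (G.degree v : ℝ) := by
  classical
  simp [Aalpha, Matrix.trace_add, Matrix.trace_smul, Matrix.trace_diagonal,
    SimpleGraph.trace_adjMatrix, smul_eq_mul]

lemma aalpha_trace_sq {V : Type} [Fintype V] (G : SimpleGraph V) (α : ℝ) :
    (Aalpha G α * Aalpha G α).trace
      = α ^ 2 * ∑ v, (G.degree v : ℝ) ^ 2 + (1 - α) ^ 2 * ∑ v, (G.degree v : ℝ) := by
  classical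
  set Dm : Matrix V V ℝ := Matrix.diagonal (fun v => (G.degree v : ℝ)) with hDm
  set Am : Matrix V V ℝ := G.adjMatrix ℝ with hAm
  have expand : Aalpha G α * Aalpha G α
      = (α * α) • (Dm * Dm) + (α * (1 - α)) • (Dm * Am)
        + ((1 - α) * α) • (Am * Dm) + ((1 - α) * (1 - α)) • (Am * Am) := by
    simp only [Aalpha, add_mul, mul_add, Matrix.smul_mul, Matrix.mul_smul, smul_smul, ← hDm, ← hAm]
    module
  have hDD : (Dm * Dm).trace = ∑ v, (G.degree v : ℝ) ^ 2 := by
    simp [hDm, diagonal_mul_diagonal, Matrix.trace_diagonal, sq]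
  have hDA : (Dm * Am).trace = 0 := by
    rw [Matrix.trace]
    apply Finset.sum_eq_zero; intro x _
    rw [Matrix.diag_apply, Matrix.mul_apply]
    apply Finset.sum_eq_zero; intro u _
    by_cases hxu : x = u
    · subst hxu; simp [hAm]
    · simp [hDm, Matrix.diagonal_apply_ne _ hxu]
  have hAD : (Am * Dm).trace = 0 := by
    rw [Matrix.trace]
    apply Finset.sum_eq_zero; intro x _
    rw [Matrix.diag_apply, Matrix.mul_apply]
    apply Finset.sum_eq_zero; intro u _
    by_cases hux : u = x
    · subst hux; simp [hAm]
    · simp [hDm, Matrix.diagonal_apply_ne _ hux]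
  have hAA : (Am * Am).trace = ∑ v, (G.degree v : ℝ) := by
    simp only [Matrix.trace, Matrix.diag_apply, hAm,
      SimpleGraph.adjMatrix_mul_self_apply_self]
  rw [expand, Matrix.trace_add, Matrix.trace_add, Matrix.trace_add,
    Matrix.trace_smul, Matrix.trace_smul, Matrix.trace_smul, Matrix.trace_smul,
    hDD, hDA, hAD, hAA]
  simp only [smul_eq_mul]
  ring

lemma sq_sum_identity {n : ℕ} (x : Fin n → ℕ) :
    (∑ i, x i) ^ 2 = ∑ i, x i ^ 2
      + 2 * ∑ p ∈ Finset.univ.filter (fun p : Fin n × Fin n => p.1 < p.2), x p.1 * x p.2 := by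
  classical
  have h0 : (∑ i, x i) ^ 2 = ∑ p ∈ (Finset.univ ×ˢ Finset.univ : Finset (Fin n × Fin n)),
      x p.1 * x p.2 := by
    rw [sq, Finset.sum_mul_sum, Finset.sum_product]
  rw [h0, Finset.univ_product_univ,
    ← Finset.sum_filter_add_sum_filter_not Finset.univ (fun p : Fin n × Fin n => p.1 < p.2)]
  have hsplit : ∑ p ∈ Finset.univ.filter (fun p : Fin n × Fin n => ¬ p.1 < p.2), x p.1 * x p.2
      = ∑ p ∈ Finset.univ.filter (fun p : Fin n × Fin n => p.1 = p.2), x p.1 * x p.2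
        + ∑ p ∈ Finset.univ.filter (fun p : Fin n × Fin n => p.2 < p.1), x p.1 * x p.2 := by
    rw [← Finset.sum_filter_add_sum_filter_not
      (Finset.univ.filter (fun p : Fin n × Fin n => ¬ p.1 < p.2))
      (fun p : Fin n × Fin n => p.1 = p.2), Finset.filter_filter, Finset.filter_filter]
    congr 1
    · apply Finset.sum_congr _ (fun _ _ => rfl)
      apply Finset.filter_congr
      intro p _
      constructor
      · rintro ⟨-, h2⟩; exact h2
      · intro h2; exact ⟨not_lt_of_ge (le_of_eq h2.symm), h2⟩
    · apply Finset.sum_congr _ (fun _ _ => rfl)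
      apply Finset.filter_congr
      intro p _
      constructor
      · rintro ⟨h1, h2⟩; exact lt_of_le_of_ne (not_lt.mp h1) (fun he => h2 he.symm)
      · intro hlt; exact ⟨not_lt_of_gt hlt, fun he => absurd (he ▸ hlt) (lt_irrefl _)⟩
  have hdiag : ∑ p ∈ Finset.univ.filter (fun p : Fin n × Fin n => p.1 = p.2), x p.1 * x p.2
      = ∑ i, x i ^ 2 := by
    rw [Finset.sum_filter]
    rw [Fintype.sum_prod_type]
    apply Finset.sum_congr rfl
    intro i _
    rw [Finset.sum_eq_single i] <;> simp +contextual [sq, eq_comm]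
  have hswap : ∑ p ∈ Finset.univ.filter (fun p : Fin n × Fin n => p.2 < p.1), x p.1 * x p.2
      = ∑ p ∈ Finset.univ.filter (fun p : Fin n × Fin n => p.1 < p.2), x p.1 * x p.2 := by
    apply Finset.sum_nbij' (fun p => Prod.swap p) (fun p => Prod.swap p) <;>
      simp [mul_comm]
  rw [hsplit, hdiag, hswap]
  ring


theorem degree_power_sums_of_Aalpha_cospectral
    {V W : Type} [Fintype V] [Fintype W]
    (G : SimpleGraph V) (G' : SimpleGraph W)
    (n : ℕ) (hV : Fintype.card V = n) (hW : Fintype.card W = n)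
    (α : ℝ) (hα0 : 0 < α) (hα1 : α ≤ 1)
    (h : (Aalpha G α).charpoly = (Aalpha G' α).charpoly)
    (d d' : Fin n → ℕ) (hd : Antitone d) (hd' : Antitone d')
    (e : Fin n ≃ V) (e' : Fin n ≃ W)
    (hde : ∀ i, d i = G.degree (e i)) (hde' : ∀ i, d' i = G'.degree (e' i)) :
    (∑ p ∈ Finset.univ.filter (fun p : Fin n × Fin n => p.1 < p.2), d p.1 * d p.2 =
      ∑ p ∈ Finset.univ.filter (fun p : Fin n × Fin n => p.1 < p.2), d' p.1 * d' p.2) ∧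
    (∑ i, (d i) ^ 2 = ∑ i, (d' i) ^ 2) := by
  obtain ⟨h1, h2⟩ := traces_of_cospectral _ _ (aalpha_isHermitian G α) (aalpha_isHermitian G' α) h
  rw [aalpha_trace, aalpha_trace] at h1
  rw [aalpha_trace_sq, aalpha_trace_sq] at h2
  have hα : α ≠ 0 := ne_of_gt hα0
  have hS : ∑ v, (G.degree v : ℝ) = ∑ w, (G'.degree w : ℝ) := mul_left_cancel₀ hα h1
  have hS2 : ∑ v, (G.degree v : ℝ) ^ 2 = ∑ w, (G'.degree w : ℝ) ^ 2 := by
    rw [hS] at h2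
    have h3 : α ^ 2 * ∑ v, (G.degree v : ℝ) ^ 2
        = α ^ 2 * ∑ w, (G'.degree w : ℝ) ^ 2 := by linarith
    exact mul_left_cancel₀ (pow_ne_zero 2 hα) h3
  have hdsum : ((∑ i, d i : ℕ) : ℝ) = ∑ v, (G.degree v : ℝ) := by
    push_cast
    calc ∑ i, (d i : ℝ) = ∑ i, (G.degree (e i) : ℝ) := by simp only [hde]
    _ = ∑ v, (G.degree v : ℝ) := Equiv.sum_comp e (fun v => (G.degree v : ℝ))
  have hdsum' : ((∑ i, d' i : ℕ) : ℝ) = ∑ w, (G'.degree w : ℝ) := by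
    push_cast
    calc ∑ i, (d' i : ℝ) = ∑ i, (G'.degree (e' i) : ℝ) := by simp only [hde']
    _ = ∑ w, (G'.degree w : ℝ) := Equiv.sum_comp e' (fun w => (G'.degree w : ℝ))
  have hdsq : ((∑ i, d i ^ 2 : ℕ) : ℝ) = ∑ v, (G.degree v : ℝ) ^ 2 := by
    push_cast
    calc ∑ i, (d i : ℝ) ^ 2 = ∑ i, (G.degree (e i) : ℝ) ^ 2 := by simp only [hde]
    _ = ∑ v, (G.degree v : ℝ) ^ 2 := Equiv.sum_comp e (fun v => (G.degree v : ℝ) ^ 2)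
  have hdsq' : ((∑ i, d' i ^ 2 : ℕ) : ℝ) = ∑ w, (G'.degree w : ℝ) ^ 2 := by
    push_cast
    calc ∑ i, (d' i : ℝ) ^ 2 = ∑ i, (G'.degree (e' i) : ℝ) ^ 2 := by simp only [hde']
    _ = ∑ w, (G'.degree w : ℝ) ^ 2 := Equiv.sum_comp e' (fun w => (G'.degree w : ℝ) ^ 2)
  have hSnat : ∑ i, d i = ∑ i, d' i := by
    have : ((∑ i, d i : ℕ) : ℝ) = ((∑ i, d' i : ℕ) : ℝ) := by rw [hdsum, hdsum', hS]
    exact_mod_cast this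
  have hS2nat : ∑ i, d i ^ 2 = ∑ i, d' i ^ 2 := by
    have : ((∑ i, d i ^ 2 : ℕ) : ℝ) = ((∑ i, d' i ^ 2 : ℕ) : ℝ) := by rw [hdsq, hdsq', hS2]
    exact_mod_cast this
  refine ⟨?_, hS2nat⟩
  have e1 := sq_sum_identity d
  have e2 := sq_sum_identity d'
  rw [hSnat, hS2nat] at e1
  have e3 := e1.symm.trans e2
  have e4 := Nat.add_left_cancel e3
  exact Nat.eq_of_mul_eq_mul_left (by norm_num) e4
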